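/- Let M be a d-dimensional subspace of the space of m×n real matrices and let X₁*,…,X_d* ∈ M be produced by the greedy algorithm. Then {X₁*,…,X_d*} is a basis of M that minimizes rank(X₁) + ⋯ + rank(X_d) over all bases {X₁,…,X_d} of M. -/

import Mathlib

/-- `Xs : Fin d → ℝ^{m×n}` is produced by the greedy algorithm for the subspace `M`:
each `Xs ℓ` lies in `M`, the first `ℓ+1` matrices are linearly independent, and `Xs ℓ`
has minimal rank among all `X ∈ M` keeping the first `ℓ` matrices together with `X`
linearly independent. -/
def GreedyProduced {m n d : ℕ} (M : Submodule ℝ (Matrix (Fin m) (Fin n) ℝ))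
    (Xs : Fin d → Matrix (Fin m) (Fin n) ℝ) : Prop :=
  (∀ i, Xs i ∈ M) ∧
  ∀ ℓ : Fin d,
    LinearIndependent ℝ (fun i : Fin (ℓ.1 + 1) => Xs (Fin.castLE ℓ.isLt i)) ∧
    ∀ X ∈ M,
      LinearIndependent ℝ
        (Fin.snoc (fun i : Fin ℓ.1 => Xs (Fin.castLE ℓ.isLt.le i)) X) →
      (Xs ℓ).rank ≤ X.rank

/-- Corollary: the output of the greedy algorithm is a basis of `M` minimizing the
sum of the ranks over all bases of `M`. -/
theorem greedy_solves_lowRankBasisProblem {m n d : ℕ}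
    (M : Submodule ℝ (Matrix (Fin m) (Fin n) ℝ))
    (hM : Module.finrank ℝ M = d)
    (Xstar : Fin d → Matrix (Fin m) (Fin n) ℝ)
    (hgreedy : GreedyProduced M Xstar) :
    LinearIndependent ℝ Xstar ∧
    Submodule.span ℝ (Set.range Xstar) = M ∧
    ∀ Y : Fin d → Matrix (Fin m) (Fin n) ℝ,
      (∀ i, Y i ∈ M) → LinearIndependent ℝ Y →
      Submodule.span ℝ (Set.range Y) = M →
      ∑ i, (Xstar i).rank ≤ ∑ i, (Y i).rank := by
  obtain ⟨hmem, hstep⟩ := hgreedy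
  -- Part 1: linear independence of Xstar
  have hindep : LinearIndependent ℝ Xstar := by
    cases d with
    | zero => exact linearIndependent_empty_type
    | succ k => exact (hstep (Fin.last k)).1
  refine ⟨hindep, ?_, ?_⟩
  -- Part 2: span = M
  · have hle : Submodule.span ℝ (Set.range Xstar) ≤ M := by
      rw [Submodule.span_le]
      rintro x ⟨i, rfl⟩
      exact hmem i
    refine Submodule.eq_of_le_of_finrank_le hle ?_
    rw [hM, finrank_span_eq_card hindep, Fintype.card_fin]
  -- Part 3: minimality of the sum of ranks
  · intro Y hYmem hYindep _hYspan
    classical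
    set R : Fin d → ℕ := fun i => (Y i).rank with hR
    set σ : Equiv.Perm (Fin d) := Tuple.sort R with hσ
    have hmono : Monotone (R ∘ σ) := Tuple.monotone_sort R
    have key : ∀ ℓ : Fin d, (Xstar ℓ).rank ≤ (Y (σ ℓ)).rank := by
      intro ℓ
      set v : Fin ℓ.1 → Matrix (Fin m) (Fin n) ℝ :=
        fun i => Xstar (Fin.castLE ℓ.isLt.le i) with hv
      set W : Submodule ℝ (Matrix (Fin m) (Fin n) ℝ) :=
        Submodule.span ℝ (Set.range v) with hW
      have hWfin : Module.finrank ℝ W ≤ ℓ.1 := by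
        simpa [Set.finrank] using finrank_range_le_card v
      -- the family of the first ℓ+1 sorted Y's
      set g : Fin (ℓ.1 + 1) → Matrix (Fin m) (Fin n) ℝ :=
        fun j => Y (σ (Fin.castLE ℓ.isLt j)) with hg
      have hgindep : LinearIndependent ℝ g :=
        hYindep.comp _ ((σ.injective.comp (Fin.castLE_injective _)))
      -- some g j is outside W
      have hout : ∃ j, g j ∉ W := by
        by_contra hcon
        push_neg at hcon
        have : LinearIndependent ℝ (fun j => (⟨g j, hcon j⟩ : W)) := by
          apply LinearIndependent.of_comp W.subtype
          exact hgindep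
        have hcard := this.fintype_card_le_finrank
        rw [Fintype.card_fin] at hcard
        omega
      obtain ⟨j, hj⟩ := hout
      -- independence of v
      have hvindep : LinearIndependent ℝ v := by
        have h := ((hstep ℓ).1).comp Fin.castSucc (Fin.castSucc_injective _)
        exact h
      have hsnoc : LinearIndependent ℝ (Fin.snoc v (g j)) :=
        linearIndependent_fin_snoc.2 ⟨hvindep, hj⟩
      have hle1 : (Xstar ℓ).rank ≤ (g j).rank :=
        (hstep ℓ).2 (g j) (hYmem _) hsnoc
      have hle2 : (g j).rank ≤ (Y (σ ℓ)).rank := by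
        have : Fin.castLE ℓ.isLt j ≤ ℓ := by
          simp [Fin.le_def, Fin.castLE]
          omega
        exact hmono this
      exact hle1.trans hle2
    calc ∑ i, (Xstar i).rank ≤ ∑ i, (Y (σ i)).rank := Finset.sum_le_sum fun i _ => key i
      _ = ∑ i, (Y i).rank := Equiv.sum_comp σ (fun i => (Y i).rank)
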